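/- Let L be the Laplacian of a finite simple connected weighted graph with positive weights, and L⁺ its Moore–Penrose pseudoinverse. Then the effective resistance R(v1,v2) := (e_{v1} − e_{v2})ᵀ L⁺ (e_{v1} − e_{v2}) is nonnegative, symmetric, and R(v1,v2) = 0 if and only if v1 = v2; i.e., R is a semi-metric on the vertex set V. -/

import Mathlib

open Matrix


theorem pinv_symm_aux {n : Type*} [Fintype n] [DecidableEq n]
    (A B : Matrix n n ℝ) (hA : Aᵀ = A)
    (h1 : A * B * A = A) (h2 : B * A * B = B)
    (h3 : (A * B)ᵀ = A * B) (h4 : (B * A)ᵀ = B * A) : Bᵀ = B := by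
  have e1 : A * Bᵀ = B * A := by
    calc A * Bᵀ = Aᵀ * Bᵀ := by rw [hA]
    _ = (B * A)ᵀ := (transpose_mul B A).symm
    _ = B * A := h4
  have e2 : Bᵀ * A = A * B := by
    calc Bᵀ * A = Bᵀ * Aᵀ := by rw [hA]
    _ = (A * B)ᵀ := (transpose_mul A B).symm
    _ = A * B := h3
  have s1 : (A * Bᵀ)ᵀ = A * Bᵀ := by rw [e1, h4, ← e1]
  have s2 : (Bᵀ * A)ᵀ = Bᵀ * A := by rw [e2, h3, ← e2]
  have hC1 : A * Bᵀ * A = A := by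
    have t := congrArg transpose h1
    rw [transpose_mul, transpose_mul, hA] at t
    rw [Matrix.mul_assoc]
    exact t
  have p1 : A * Bᵀ = (A * B) * (A * Bᵀ) := by
    conv_lhs => rw [← h1]
    simp only [Matrix.mul_assoc]
  have p2 : A * Bᵀ = (A * Bᵀ) * (A * B) := by
    have t := congrArg transpose p1
    simp only [transpose_mul, transpose_transpose, hA] at t
    rw [← e1, e2] at t
    exact t
  have q : A * B = (A * Bᵀ) * (A * B) := by
    conv_lhs => rw [← hC1]
    simp only [Matrix.mul_assoc]
  have g1 : A * Bᵀ = A * B := p2.trans q.symm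
  have r1 : Bᵀ * A = (Bᵀ * A) * (B * A) := by
    conv_lhs => rw [← h1]
    simp only [Matrix.mul_assoc]
  have r2 : Bᵀ * A = (B * A) * (Bᵀ * A) := by
    have t := congrArg transpose r1
    simp only [transpose_mul, transpose_transpose, hA] at t
    rw [← e2, e1] at t
    exact t
  have s : B * A = (B * A) * (Bᵀ * A) := by
    conv_lhs => rw [← hC1]
    simp only [Matrix.mul_assoc]
  have g2 : Bᵀ * A = B * A := r2.trans s.symm
  have hC2 : Bᵀ * A * Bᵀ = Bᵀ := by
    have t := congrArg transpose h2
    rw [transpose_mul, transpose_mul, hA] at t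
    rw [Matrix.mul_assoc]
    exact t
  calc Bᵀ = Bᵀ * A * Bᵀ := hC2.symm
  _ = (B * A) * Bᵀ := by rw [g2]
  _ = B * (A * Bᵀ) := by rw [Matrix.mul_assoc]
  _ = B * (A * B) := by rw [g1]
  _ = B := by rw [← Matrix.mul_assoc, h2]


theorem lap_quad {V : Type*} [Fintype V] [DecidableEq V]
    (w : V → V → ℝ) (hsym : ∀ u v, w u v = w v u) (hdiag : ∀ v, w v v = 0)
    (L : Matrix V V ℝ)
    (hL : ∀ u v, L u v = if u = v then ∑ k, w u k else -(w u v))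
    (x : V → ℝ) :
    2 * (x ⬝ᵥ L.mulVec x) = ∑ u, ∑ v, w u v * (x u - x v) ^ 2 := by
  have hL' : ∀ u v, L u v = (if u = v then ∑ k, w u k else 0) - w u v := by
    intro u v
    rw [hL]
    by_cases h : u = v
    · subst h; simp [hdiag]
    · simp [h]
  have hinner : ∀ u, (L.mulVec x) u = (∑ v, w u v) * x u - ∑ v, w u v * x v := by
    intro u
    simp only [mulVec, dotProduct, hL', sub_mul, ite_mul, zero_mul]
    rw [Finset.sum_sub_distrib, Finset.sum_ite_eq]
    simp [Finset.sum_mul]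
  have hdot : x ⬝ᵥ L.mulVec x =
      (∑ u, ∑ v, w u v * (x u * x u)) - ∑ u, ∑ v, w u v * (x u * x v) := by
    simp only [dotProduct, hinner]
    rw [← Finset.sum_sub_distrib]
    refine Finset.sum_congr rfl fun u _ => ?_
    rw [Finset.sum_mul, mul_sub, Finset.mul_sum, Finset.mul_sum, ← Finset.sum_sub_distrib, ← Finset.sum_sub_distrib]
    refine Finset.sum_congr rfl fun v _ => by ring
  have hswap : (∑ u, ∑ v, w u v * (x v * x v)) = ∑ u, ∑ v, w u v * (x u * x u) := by
    rw [Finset.sum_comm]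
    refine Finset.sum_congr rfl fun u _ => Finset.sum_congr rfl fun v _ => by rw [hsym]
  have expand : ∀ u v : V, w u v * (x u - x v) ^ 2 =
      w u v * (x u * x u) + w u v * (x v * x v) - 2 * (w u v * (x u * x v)) :=
    fun u v => by ring
  calc 2 * (x ⬝ᵥ L.mulVec x)
      = 2 * ((∑ u, ∑ v, w u v * (x u * x u)) - ∑ u, ∑ v, w u v * (x u * x v)) := by
        rw [hdot]
    _ = (∑ u, ∑ v, w u v * (x u * x u)) + (∑ u, ∑ v, w u v * (x v * x v))
          - 2 * ∑ u, ∑ v, w u v * (x u * x v) := by rw [hswap]; ring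
    _ = ∑ u, ((∑ v, w u v * (x u * x u)) + (∑ v, w u v * (x v * x v))
          - 2 * ∑ v, w u v * (x u * x v)) := by
        rw [Finset.sum_sub_distrib, Finset.sum_add_distrib, Finset.mul_sum]
    _ = ∑ u, ∑ v, (w u v * (x u * x u) + w u v * (x v * x v)
          - 2 * (w u v * (x u * x v))) := by
        refine Finset.sum_congr rfl fun u _ => ?_
        rw [Finset.sum_sub_distrib, Finset.sum_add_distrib, Finset.mul_sum]
    _ = ∑ u, ∑ v, w u v * (x u - x v) ^ 2 := by
        refine Finset.sum_congr rfl fun u _ => Finset.sum_congr rfl fun v _ => (expand u v).symm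


theorem lap_mulVec {V : Type*} [Fintype V] [DecidableEq V]
    (w : V → V → ℝ) (hdiag : ∀ v, w v v = 0)
    (L : Matrix V V ℝ)
    (hL : ∀ u v, L u v = if u = v then ∑ k, w u k else -(w u v))
    (x : V → ℝ) (u : V) :
    (L.mulVec x) u = (∑ v, w u v) * x u - ∑ v, w u v * x v := by
  have hL' : ∀ u v, L u v = (if u = v then ∑ k, w u k else 0) - w u v := by
    intro u v
    rw [hL]
    by_cases h : u = v
    · subst h; simp [hdiag]
    · simp [h]
  simp only [mulVec, dotProduct, hL', sub_mul, ite_mul, zero_mul]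
  rw [Finset.sum_sub_distrib, Finset.sum_ite_eq]
  simp [Finset.sum_mul]

/-- The effective resistance
`R(v1,v2) = (e_{v1} − e_{v2})ᵀ L⁺ (e_{v1} − e_{v2})`, with `L⁺` the Moore–Penrose
pseudoinverse of the Laplacian of a finite simple connected weighted graph with positive
weights, is nonnegative, symmetric, and vanishes exactly on the diagonal; i.e. it is a
semi-metric on `V`. -/
theorem effectiveResistance_semimetric {V : Type*} [Fintype V] [DecidableEq V]
    (w : V → V → ℝ) (hsym : ∀ u v, w u v = w v u) (hnn : ∀ u v, 0 ≤ w u v)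
    (hdiag : ∀ v, w v v = 0)
    (G : SimpleGraph V) (hG : ∀ u v, G.Adj u v ↔ u ≠ v ∧ 0 < w u v)
    (hconn : G.Connected)
    (L : Matrix V V ℝ)
    (hL : ∀ u v, L u v = if u = v then ∑ k, w u k else -(w u v))
    (Lp : Matrix V V ℝ)
    (hmp1 : L * Lp * L = L) (hmp2 : Lp * L * Lp = Lp)
    (hmp3 : (L * Lp)ᵀ = L * Lp) (hmp4 : (Lp * L)ᵀ = Lp * L)
    (R : V → V → ℝ)
    (hR : ∀ v1 v2, R v1 v2 =
      dotProduct (Pi.single v1 1 - Pi.single v2 1)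
        (Lp.mulVec (Pi.single v1 1 - Pi.single v2 1))) :
    (∀ v1 v2, 0 ≤ R v1 v2) ∧ (∀ v1 v2, R v1 v2 = R v2 v1) ∧
      (∀ v1 v2, R v1 v2 = 0 ↔ v1 = v2) := by
  -- L is symmetric
  have Lsym : Lᵀ = L := by
    ext u v
    rw [transpose_apply, hL, hL]
    by_cases h : u = v
    · subst h; rfl
    · simp only [if_neg h, if_neg (Ne.symm h), hsym]
  -- symmetry of Lp (Moore-Penrose inverse of a symmetric matrix)
  have Lpsym : Lpᵀ = Lp := pinv_symm_aux L Lp Lsym hmp1 hmp2 hmp3 hmp4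
  -- symmetric matrices can be moved across the dot product
  have hsymdot : ∀ (M : Matrix V V ℝ), Mᵀ = M → ∀ x y : V → ℝ,
      x ⬝ᵥ M.mulVec y = (M.mulVec x) ⬝ᵥ y := by
    intro M hM x y
    rw [Matrix.dotProduct_mulVec, ← Matrix.mulVec_transpose, hM]
  -- nonnegativity of the Laplacian quadratic form
  have hqnn : ∀ x : V → ℝ, 0 ≤ x ⬝ᵥ L.mulVec x := by
    intro x
    have hq := lap_quad w hsym hdiag L hL x
    have h0 : 0 ≤ ∑ u, ∑ v, w u v * (x u - x v) ^ 2 :=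
      Finset.sum_nonneg fun u _ => Finset.sum_nonneg fun v _ =>
        mul_nonneg (hnn u v) (sq_nonneg _)
    linarith
  -- vanishing quadratic form forces a constant vector (connectivity)
  have hconst : ∀ x : V → ℝ, x ⬝ᵥ L.mulVec x = 0 → ∀ u v, x u = x v := by
    intro x hx
    have hq := lap_quad w hsym hdiag L hL x
    rw [hx, mul_zero] at hq
    have houter := (Finset.sum_eq_zero_iff_of_nonneg fun u _ =>
      (Finset.sum_nonneg fun v _ => mul_nonneg (hnn u v) (sq_nonneg _))).mp hq.symm
    have hterm : ∀ a b : V, w a b * (x a - x b) ^ 2 = 0 := by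
      intro a b
      exact (Finset.sum_eq_zero_iff_of_nonneg fun v _ =>
        mul_nonneg (hnn a v) (sq_nonneg _)).mp (houter a (Finset.mem_univ a))
        b (Finset.mem_univ b)
    have hadj : ∀ a b : V, G.Adj a b → x a = x b := by
      intro a b hab
      obtain ⟨hne, hpos⟩ := (hG a b).mp hab
      have := hterm a b
      have h2 : (x a - x b) ^ 2 = 0 := by
        rcases mul_eq_zero.mp this with h | h
        · exact absurd h (ne_of_gt hpos)
        · exact h
      have := pow_eq_zero_iff (n := 2) (by norm_num) |>.mp h2
      linarith [sub_eq_zero.mp this]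
    have hwalk : ∀ (a b : V) (p : G.Walk a b), x a = x b := by
      intro a b p
      induction p with
      | nil => rfl
      | cons h _ ih => exact (hadj _ _ h).trans ih
    intro u v
    exact hwalk u v (hconn.preconnected u v).some
  -- the quadratic form of Lp equals the Laplacian quadratic form of Lp d
  have key : ∀ d : V → ℝ,
      d ⬝ᵥ Lp.mulVec d = (Lp.mulVec d) ⬝ᵥ L.mulVec (Lp.mulVec d) := by
    intro d
    conv_lhs => rw [← hmp2]
    rw [← Matrix.mulVec_mulVec, ← Matrix.mulVec_mulVec, hsymdot Lp Lpsym]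
  refine ⟨?_, ?_, ?_⟩
  · -- nonnegativity
    intro v1 v2
    rw [hR, key]
    exact hqnn _
  · -- symmetry
    intro v1 v2
    rw [hR, hR]
    have hneg : (Pi.single v2 1 - Pi.single v1 1 : V → ℝ)
        = -(Pi.single v1 1 - Pi.single v2 1) := (neg_sub _ _).symm
    rw [hneg, Matrix.mulVec_neg, dotProduct_neg, neg_dotProduct, neg_neg]
  · -- zero iff equal
    intro v1 v2
    constructor
    · intro hz
      rw [hR] at hz
      set d : V → ℝ := Pi.single v1 1 - Pi.single v2 1 with hd
      by_contra hne
      -- Lp d gives zero Laplacian energy, hence is constant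
      have h1 : (Lp.mulVec d) ⬝ᵥ L.mulVec (Lp.mulVec d) = 0 := by
        rw [← key]; exact hz
      have hyc : ∀ u v, (Lp.mulVec d) u = (Lp.mulVec d) v := hconst _ h1
      -- L applied to a constant vector is zero
      have hLy : L.mulVec (Lp.mulVec d) = 0 := by
        funext u
        rw [lap_mulVec w hdiag L hL]
        have : ∀ v, (Lp.mulVec d) v = (Lp.mulVec d) u := fun v => hyc v u
        simp only [this]
        rw [← Finset.sum_mul]
        ring_nf
        simp [Pi.zero_apply]
      -- hence d is orthogonal to the range of L
      have hperp : ∀ z : V → ℝ, d ⬝ᵥ L.mulVec z = 0 := by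
        intro z
        calc d ⬝ᵥ L.mulVec z = d ⬝ᵥ (L * Lp * L).mulVec z := by rw [hmp1]
        _ = d ⬝ᵥ (L * Lp).mulVec (L.mulVec z) := by rw [Matrix.mulVec_mulVec]
        _ = ((L * Lp).mulVec d) ⬝ᵥ (L.mulVec z) := hsymdot (L * Lp) hmp3 _ _
        _ = (L.mulVec (Lp.mulVec d)) ⬝ᵥ (L.mulVec z) := by rw [Matrix.mulVec_mulVec]
        _ = 0 := by rw [hLy, zero_dotProduct]
      -- so L d = 0
      have hLd : L.mulVec d = 0 := by
        have h2 : ∀ z : V → ℝ, (L.mulVec d) ⬝ᵥ z = 0 := by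
          intro z
          rw [← hsymdot L Lsym]
          exact hperp z
        have h3 := h2 (L.mulVec d)
        exact dotProduct_self_eq_zero.mp h3
      -- so d is constant by connectivity
      have hdc : ∀ u v, d u = d v := by
        refine hconst d ?_
        rw [hLd, dotProduct_zero]
      have := hdc v1 v2
      rw [hd] at this
      simp only [Pi.sub_apply, Pi.single_eq_same,
        Pi.single_eq_of_ne (Ne.symm hne), Pi.single_eq_of_ne hne] at this
      norm_num at this
    · intro h
      subst h
      rw [hR]
      simp
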